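/- Suppose λ_{i,1}·λ_{j,2} + η > 0 for all i, j. Then for any n1×n2 real matrix Y, any real number μ, and any real constant C, the log profile likelihood satisfies C − (1/2)·log det(R̃) − (N/2)·log((vec(Y) − μ·1_N)ᵀ·R̃⁻¹·(vec(Y) − μ·1_N)) = C − (1/2)·Σ_{i=1}^{n1} Σ_{j=1}^{n2} log(λ_{i,1}·λ_{j,2} + η) − (N/2)·log(Σ_{i=1}^{n1} Σ_{j=1}^{n2} Ỹ_{i,j}² / (λ_{i,1}·λ_{j,2} + η)), where Ỹ_{i,j} is the (i,j) entry of U1ᵀ·(Y − μ·J)·U2 and J is the n1×n2 all-ones matrix. -/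

import Mathlib

open Matrix
open scoped Kronecker

/-- Column-stacking vectorization: the entry of `vec Y` at index `(j, i)` is `Y i j`. -/
def vec {n1 n2 : ℕ} (Y : Matrix (Fin n1) (Fin n2) ℝ) : Fin n2 × Fin n1 → ℝ :=
  fun p => Y p.2 p.1

section aux

variable {n : Type*} [Fintype n] [DecidableEq n]

lemma aux_det (U : Matrix n n ℝ) (hU : U * Uᵀ = 1) (d : n → ℝ) :
    (U * Matrix.diagonal d * Uᵀ).det = ∏ p, d p := by
  have h1 : U.det * Uᵀ.det = 1 := by rw [← Matrix.det_mul, hU, Matrix.det_one]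
  rw [Matrix.det_mul, Matrix.det_mul, Matrix.det_diagonal, mul_right_comm, h1, one_mul]

lemma aux_inv (U : Matrix n n ℝ) (hU : U * Uᵀ = 1) (hU' : Uᵀ * U = 1)
    (d : n → ℝ) (hd : ∀ p, d p ≠ 0) :
    (U * Matrix.diagonal d * Uᵀ)⁻¹ = U * Matrix.diagonal (fun p => (d p)⁻¹) * Uᵀ := by
  apply Matrix.inv_eq_right_inv
  have hdd : Matrix.diagonal d * Matrix.diagonal (fun p => (d p)⁻¹)
      = (1 : Matrix n n ℝ) := by
    rw [Matrix.diagonal_mul_diagonal]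
    have : (fun p => d p * (d p)⁻¹) = fun _ => (1 : ℝ) := by
      funext p; exact mul_inv_cancel₀ (hd p)
    rw [this, Matrix.diagonal_one]
  simp only [Matrix.mul_assoc]
  rw [← Matrix.mul_assoc Uᵀ U, hU', Matrix.one_mul,
    ← Matrix.mul_assoc (Matrix.diagonal d), hdd, Matrix.one_mul, hU]

lemma aux_quad (U : Matrix n n ℝ) (d : n → ℝ) (v : n → ℝ) :
    v ⬝ᵥ ((U * Matrix.diagonal (fun p => (d p)⁻¹) * Uᵀ) *ᵥ v)
      = ∑ p, ((Uᵀ *ᵥ v) p) ^ 2 / d p := by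
  rw [Matrix.mul_assoc, ← Matrix.mulVec_mulVec, ← Matrix.mulVec_mulVec,
    Matrix.dotProduct_mulVec, ← Matrix.mulVec_transpose]
  simp only [dotProduct, Matrix.mulVec_diagonal]
  refine Finset.sum_congr rfl fun p _ => ?_
  rw [div_eq_mul_inv]; ring

end aux

theorem stmt9 (n1 n2 : ℕ) (hn1 : 0 < n1) (hn2 : 0 < n2)
    (R1 U1 : Matrix (Fin n1) (Fin n1) ℝ) (R2 U2 : Matrix (Fin n2) (Fin n2) ℝ)
    (lam1 : Fin n1 → ℝ) (lam2 : Fin n2 → ℝ)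
    (hR1sym : R1.IsSymm) (hR2sym : R2.IsSymm)
    (hU1 : U1 * U1ᵀ = 1) (hU1' : U1ᵀ * U1 = 1)
    (hU2 : U2 * U2ᵀ = 1) (hU2' : U2ᵀ * U2 = 1)
    (hR1 : R1 = U1 * Matrix.diagonal lam1 * U1ᵀ)
    (hR2 : R2 = U2 * Matrix.diagonal lam2 * U2ᵀ)
    (η : ℝ)
    (hpos : ∀ (i : Fin n1) (j : Fin n2), 0 < lam1 i * lam2 j + η)
    (Y : Matrix (Fin n1) (Fin n2) ℝ) (μ : ℝ) (C : ℝ) :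
    C - (1 / 2) * Real.log
          (R2 ⊗ₖ R1 + η • (1 : Matrix (Fin n2 × Fin n1) (Fin n2 × Fin n1) ℝ)).det
      - (((n1 * n2 : ℕ) : ℝ) / 2) * Real.log
          ((_root_.vec Y - μ • (fun _ : Fin n2 × Fin n1 => (1 : ℝ))) ⬝ᵥ
            ((R2 ⊗ₖ R1 + η • (1 : Matrix (Fin n2 × Fin n1) (Fin n2 × Fin n1) ℝ))⁻¹ *ᵥ
              (_root_.vec Y - μ • (fun _ : Fin n2 × Fin n1 => (1 : ℝ)))))
    = C - (1 / 2) * (∑ i : Fin n1, ∑ j : Fin n2, Real.log (lam1 i * lam2 j + η))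
      - (((n1 * n2 : ℕ) : ℝ) / 2) * Real.log
          (∑ i : Fin n1, ∑ j : Fin n2,
            ((U1ᵀ * (Y - μ • (Matrix.of fun _ _ => (1 : ℝ) : Matrix (Fin n1) (Fin n2) ℝ)) * U2) i j) ^ 2
              / (lam1 i * lam2 j + η)) := by
  set U : Matrix (Fin n2 × Fin n1) (Fin n2 × Fin n1) ℝ := U2 ⊗ₖ U1 with hUdef
  set d : Fin n2 × Fin n1 → ℝ := fun p => lam2 p.1 * lam1 p.2 + η with hddef
  have hdpos : ∀ p, 0 < d p := fun p => by
    simpa [hddef, mul_comm] using hpos p.2 p.1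
  have hUo : U * Uᵀ = 1 := by
    rw [hUdef, ← Matrix.kroneckerMap_transpose, ← Matrix.mul_kronecker_mul, hU1, hU2,
      Matrix.one_kronecker_one]
  have hUo' : Uᵀ * U = 1 := by
    rw [hUdef, ← Matrix.kroneckerMap_transpose, ← Matrix.mul_kronecker_mul, hU1', hU2',
      Matrix.one_kronecker_one]
  have hRt : R2 ⊗ₖ R1 + η • (1 : Matrix (Fin n2 × Fin n1) (Fin n2 × Fin n1) ℝ)
      = U * Matrix.diagonal d * Uᵀ := by
    have hsmul : η • (1 : Matrix (Fin n2 × Fin n1) (Fin n2 × Fin n1) ℝ)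
        = U * Matrix.diagonal (fun _ => η) * Uᵀ := by
      rw [← Matrix.smul_one_eq_diagonal, Matrix.mul_smul, Matrix.mul_one,
        Matrix.smul_mul, hUo]
    rw [hR1, hR2, Matrix.mul_kronecker_mul, Matrix.mul_kronecker_mul,
      Matrix.diagonal_kronecker_diagonal, Matrix.kroneckerMap_transpose, ← hUdef,
      hsmul, ← Matrix.add_mul, ← Matrix.mul_add, Matrix.diagonal_add, hddef]
  -- vectors
  set v : Fin n2 × Fin n1 → ℝ := _root_.vec Y - μ • (fun _ : Fin n2 × Fin n1 => (1 : ℝ)) with hvdef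
  have hw : ∀ p : Fin n2 × Fin n1, (Uᵀ *ᵥ v) p
      = (U1ᵀ * (Y - μ • (Matrix.of fun _ _ => (1 : ℝ) : Matrix (Fin n1) (Fin n2) ℝ)) * U2) p.2 p.1 := by
    intro p
    simp only [hUdef, hvdef, Matrix.kroneckerMap_transpose, Matrix.mulVec, dotProduct,
      Matrix.mul_apply, Matrix.kroneckerMap_apply, Matrix.transpose_apply, _root_.vec,
      Pi.sub_apply, Pi.smul_apply, smul_eq_mul, mul_one, Matrix.sub_apply, Matrix.smul_apply,
      Matrix.of_apply, Fintype.sum_prod_type, Finset.sum_mul, Finset.mul_sum]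
    refine Finset.sum_congr rfl fun i _ => Finset.sum_congr rfl fun j _ => ?_
    ring
  -- det part
  have hdet : (R2 ⊗ₖ R1 + η • (1 : Matrix (Fin n2 × Fin n1) (Fin n2 × Fin n1) ℝ)).det
      = ∏ p, d p := by rw [hRt, aux_det U hUo d]
  have hlogdet : Real.log (∏ p, d p) = ∑ i : Fin n1, ∑ j : Fin n2, Real.log (lam1 i * lam2 j + η) := by
    rw [Real.log_prod (fun p _ => (hdpos p).ne')]
    rw [Fintype.sum_prod_type, Finset.sum_comm]
    refine Finset.sum_congr rfl fun i _ => Finset.sum_congr rfl fun j _ => ?_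
    rw [hddef]; ring_nf
  -- quad part
  have hinv := aux_inv U hUo hUo' d (fun p => (hdpos p).ne')
  have hquad : v ⬝ᵥ ((R2 ⊗ₖ R1 + η • (1 : Matrix (Fin n2 × Fin n1) (Fin n2 × Fin n1) ℝ))⁻¹ *ᵥ v)
      = ∑ i : Fin n1, ∑ j : Fin n2,
          ((U1ᵀ * (Y - μ • (Matrix.of fun _ _ => (1 : ℝ) : Matrix (Fin n1) (Fin n2) ℝ)) * U2) i j) ^ 2
            / (lam1 i * lam2 j + η) := by
    rw [hRt, hinv, aux_quad U d v]
    rw [Fintype.sum_prod_type, Finset.sum_comm]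
    refine Finset.sum_congr rfl fun i _ => Finset.sum_congr rfl fun j _ => ?_
    rw [hw (j, i), hddef]
    ring_nf
  rw [hdet, hlogdet, hquad]
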